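/- Let n ≥ 2, α > 1, R > 0, and let u : ℝⁿ → ℝ be continuously differentiable in a neighborhood of the closed ball of radius R centered at the origin. Define w_R(x) = (|x|/R)^α u(R x/|x|) for x ≠ 0 and w_R(0) = 0. Then the Dirichlet energy of w_R on B_R satisfies ∫_{B_R} |∇w_R|² dx = (R^n / (n + 2(α−1))) · ∫_{S^{n-1}} [ α² u(Rθ)²/R² + |∇u(Rθ)|² − (∇u(Rθ)·θ)² ] dθ. -/

import Mathlib

open MeasureTheory Metric Set Filter
open scoped RealInnerProductSpace Topology Classical

noncomputable section

/-- Integral over the unit sphere `S^{n-1}` in `ℝⁿ` with its standard surface measure. -/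
def sphInt (n : ℕ) (f : EuclideanSpace ℝ (Fin n) → ℝ) : ℝ :=
  ∫ θ : sphere (0 : EuclideanSpace ℝ (Fin n)) 1,
    f (θ : EuclideanSpace ℝ (Fin n)) ∂((volume : Measure (EuclideanSpace ℝ (Fin n))).toSphere)

/-- The Weiss-type monotonicity quantity
`A(R) = R^{-(n+2(α-1))} ∫_{B_R} |∇u|² - α ∫_{S^{n-1}} (u(Rθ)/R^α)²`. -/
def Afun (n : ℕ) (α : ℝ) (u : EuclideanSpace ℝ (Fin n) → ℝ) (R : ℝ) : ℝ :=
  R ^ (-((n : ℝ) + 2 * (α - 1))) *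
      (∫ x in ball (0 : EuclideanSpace ℝ (Fin n)) R, ‖gradient u x‖ ^ 2)
    - α * sphInt n (fun θ => (u (R • θ) / R ^ α) ^ 2)

/-- The α-homogeneous extension `w_R(x) = (|x|/R)^α u(R x/|x|)`, with `w_R 0 = 0`. -/
def homExt (n : ℕ) (α R : ℝ) (u : EuclideanSpace ℝ (Fin n) → ℝ)
    (x : EuclideanSpace ℝ (Fin n)) : ℝ :=
  if x = 0 then 0 else (‖x‖ / R) ^ α * u ((R / ‖x‖) • x)

/-- The α-rescaling `u_R(x) = u(Rx)/R^α`. -/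
def rescale (n : ℕ) (α : ℝ) (u : EuclideanSpace ℝ (Fin n) → ℝ) (R : ℝ)
    (x : EuclideanSpace ℝ (Fin n)) : ℝ :=
  u (R • x) / R ^ α

section Aux
variable {E : Type*} [NormedAddCommGroup E] [InnerProductSpace ℝ E]

lemma hasFDerivAt_norm' {x : E} (hx : x ≠ 0) :
    HasFDerivAt (fun y : E => ‖y‖) (innerSL ℝ (‖x‖⁻¹ • x)) x := by
  have hsq : HasFDerivAt (fun y : E => ‖y‖ ^ 2) (2 • (innerSL ℝ x)) x :=
    (hasStrictFDerivAt_norm_sq x).hasFDerivAt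
  have hpos : (0:ℝ) < ‖x‖ ^ 2 := pow_pos (norm_pos_iff.2 hx) 2
  have hsqrt : HasDerivAt Real.sqrt (1 / (2 * Real.sqrt (‖x‖ ^ 2))) (‖x‖ ^ 2) :=
    Real.hasDerivAt_sqrt (ne_of_gt hpos)
  have h := hsqrt.comp_hasFDerivAt x hsq
  have hnx : Real.sqrt (‖x‖ ^ 2) = ‖x‖ := Real.sqrt_sq (norm_nonneg x)
  have : (fun y : E => Real.sqrt (‖y‖ ^ 2)) = fun y : E => ‖y‖ := by
    funext y; exact congrArg _ rfl |>.trans (Real.sqrt_sq (norm_nonneg y))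
  rw [show (Real.sqrt ∘ fun y : E => ‖y‖ ^ 2) = fun y : E => ‖y‖ from funext fun y => Real.sqrt_sq (norm_nonneg y)] at h
  convert h using 1
  · rfl
  · rfl
  ext v
  simp only [innerSL_apply_apply, ContinuousLinearMap.coe_smul', Pi.smul_apply, hnx,
    ContinuousLinearMap.smul_apply, inner_smul_left, RCLike.conj_to_real]
  have : ‖x‖ ≠ 0 := norm_ne_zero_iff.2 hx
  field_simp
  simp only [smul_eq_mul, nsmul_eq_mul, Nat.cast_ofNat]
  field_simp


end Aux

section Key
variable {n : ℕ} {α R : ℝ} {u : EuclideanSpace ℝ (Fin n) → ℝ}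
  {V : Set (EuclideanSpace ℝ (Fin n))}

lemma key_grad (hα : 1 < α) (hR : 0 < R) (hV : IsOpen V) (huV : ContDiffOn ℝ 1 u V)
    {x : EuclideanSpace ℝ (Fin n)} (hx : x ≠ 0) (hxV : (R / ‖x‖) • x ∈ V) :
    HasGradientAt (homExt n α R u)
      ((α * ‖x‖ ^ (α - 1) / R ^ α * u ((R / ‖x‖) • x)) • (‖x‖⁻¹ • x)
        + (‖x‖ ^ (α - 1) * R ^ (1 - α)) • (gradient u ((R / ‖x‖) • x)
            - ⟪gradient u ((R / ‖x‖) • x), ‖x‖⁻¹ • x⟫ • (‖x‖⁻¹ • x))) x := by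
  let E := EuclideanSpace ℝ (Fin n)
  set r : ℝ := ‖x‖ with hr_def
  have hr : 0 < r := norm_pos_iff.2 hx
  set θ : E := ‖x‖⁻¹ • x with hθ_def
  set y : E := (R / ‖x‖) • x with hy_def
  set du : E := gradient u y with hdu_def
  -- derivative of the norm
  have hnorm : HasFDerivAt (fun z : E => ‖z‖) (innerSL ℝ θ) x := hasFDerivAt_norm' hx
  -- derivative of A z = (‖z‖/R)^α
  have hpow : HasDerivAt (fun t : ℝ => (t / R) ^ α) (α * (r / R) ^ (α - 1) / R) r := by
    have h1 : HasDerivAt (fun s : ℝ => s ^ α) (α * (r / R) ^ (α - 1)) (r / R) :=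
      Real.hasDerivAt_rpow_const (Or.inl (by positivity))
    have h2 : HasDerivAt (fun t : ℝ => t / R) (1 / R) r := (hasDerivAt_id r).div_const R
    simpa [div_eq_mul_inv, mul_assoc, Function.comp_def] using h1.comp r h2
  have hA : HasFDerivAt (fun z : E => (‖z‖ / R) ^ α)
      ((α * (r / R) ^ (α - 1) / R) • (innerSL ℝ θ)) x := by
    have := hpow.comp_hasFDerivAt x hnorm; exact this
  -- derivative of c z = R / ‖z‖
  have hinv : HasDerivAt (fun t : ℝ => R / t) (-R / r ^ 2) r := by
    have := (hasDerivAt_inv (ne_of_gt hr)).const_mul R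
    simpa [div_eq_mul_inv, neg_div] using this
  have hc : HasFDerivAt (fun z : E => R / ‖z‖) ((-R / r ^ 2) • (innerSL ℝ θ)) x :=
    hinv.comp_hasFDerivAt x hnorm
  -- derivative of Φ z = (R/‖z‖) • z
  have hΦ : HasFDerivAt (fun z : E => (R / ‖z‖) • z)
      ((R / r) • ContinuousLinearMap.id ℝ E + ((-R / r ^ 2) • (innerSL ℝ θ)).smulRight x) x := by
    exact hc.smul (hasFDerivAt_id x)
  -- derivative of u at y
  have hy_mem : y ∈ V := hxV
  have hu' : HasFDerivAt u (fderiv ℝ u y) y :=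
    ((huV.contDiffAt (hV.mem_nhds hy_mem)).differentiableAt one_ne_zero).hasFDerivAt
  have hcomp : HasFDerivAt (fun z : E => u ((R / ‖z‖) • z))
      ((fderiv ℝ u y).comp ((R / r) • ContinuousLinearMap.id ℝ E
        + ((-R / r ^ 2) • (innerSL ℝ θ)).smulRight x)) x := hu'.comp x hΦ
  have hmul := hA.mul hcomp
  have heq : homExt n α R u =ᶠ[𝓝 x] fun z => (‖z‖ / R) ^ α * u ((R / ‖z‖) • z) :=
    eventuallyEq_of_mem (isOpen_compl_singleton.mem_nhds hx) fun z hz => if_neg hz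
  have hfinal := hmul.congr_of_eventuallyEq heq
  rw [hasGradientAt_iff_hasFDerivAt]
  convert hfinal using 1
  · rfl
  -- identify the two continuous linear maps
  have htd : InnerProductSpace.toDual ℝ E du = fderiv ℝ u y :=
    LinearIsometryEquiv.apply_symm_apply _ _
  ext v : 1
  have hfd : fderiv ℝ u y v = ⟪du, v⟫ := by
    rw [← htd]; rfl
  have hθx : ⟪du, x⟫ = r * ⟪du, θ⟫ := by
    rw [hθ_def, real_inner_smul_right]
    field_simp
    rfl
  have hθv : ∀ w : E, (innerSL ℝ θ) w = ⟪θ, w⟫ := fun w => rfl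
  simp only [ContinuousLinearMap.add_apply, ContinuousLinearMap.coe_comp', Function.comp_apply,
    ContinuousLinearMap.smul_apply, ContinuousLinearMap.coe_smul', Pi.smul_apply,
    ContinuousLinearMap.smulRight_apply, ContinuousLinearMap.id_apply, hθv,
    InnerProductSpace.toDual_apply_apply, smul_eq_mul]
  have h2 : fderiv ℝ u y x = r * ⟪du, θ⟫ := by rw [← htd]; exact hθx
  rw [← hr_def, ← hy_def]
  simp only [_root_.map_add, _root_.map_smul, smul_eq_mul]
  simp only [hfd, h2, inner_add_left, inner_sub_left, real_inner_smul_left]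
  have hRpos : (0:ℝ) < R ^ α := Real.rpow_pos_of_pos hR α
  have e1 : (r / R) ^ α = r ^ (α - 1) * r / R ^ α := by
    rw [Real.div_rpow hr.le hR.le, show α = (α - 1) + 1 by ring, Real.rpow_add hr,
      Real.rpow_one]
    ring_nf
  have e2 : (r / R) ^ (α - 1) = r ^ (α - 1) * R / R ^ α := by
    rw [Real.div_rpow hr.le hR.le, show R ^ (α - 1) = R ^ α / R by
      rw [show α = (α - 1) + 1 by ring, Real.rpow_add hR, Real.rpow_one]; ring_nf
      rw [mul_assoc, mul_inv_cancel₀ hR.ne', mul_one]]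
    field_simp
  have e3 : R ^ (1 - α) = R / R ^ α := by
    rw [show (1:ℝ) - α = 1 + -α by ring, Real.rpow_add hR, Real.rpow_one,
      Real.rpow_neg hR.le]
    field_simp
  erw [ContinuousLinearMap.id_apply (R₁ := ℝ) v]
  rw [hfd]
  rw [e1, e2, e3]
  generalize ⟪θ, v⟫ = q1
  generalize ⟪du, v⟫ = q2
  generalize ⟪du, θ⟫ = q3
  generalize u y = q4
  generalize hb : R ^ α = b at hRpos
  generalize ha : r ^ (α - 1) = a
  field_simp
  ring

lemma key_normsq (hα : 1 < α) (hR : 0 < R) (hV : IsOpen V) (huV : ContDiffOn ℝ 1 u V)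
    (hsub : sphere (0 : EuclideanSpace ℝ (Fin n)) R ⊆ V)
    {θ : EuclideanSpace ℝ (Fin n)} (hθ : ‖θ‖ = 1) {r : ℝ} (hr : 0 < r) :
    ‖gradient (homExt n α R u) (r • θ)‖ ^ 2 =
      (r ^ (2*α - 2) * R ^ (2 - 2*α)) *
        (α ^ 2 * u (R • θ) ^ 2 / R ^ 2 + ‖gradient u (R • θ)‖ ^ 2
          - ⟪gradient u (R • θ), θ⟫ ^ 2) := by
  set x : EuclideanSpace ℝ (Fin n) := r • θ with hx_def
  have hnx : ‖x‖ = r := by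
    rw [hx_def, norm_smul, hθ, Real.norm_eq_abs, abs_of_pos hr, mul_one]
  have hx0 : x ≠ 0 := by
    intro h; rw [h, norm_zero] at hnx; exact hr.ne hnx
  have hxinv : ‖x‖⁻¹ • x = θ := by
    rw [hnx, hx_def, smul_smul, inv_mul_cancel₀ hr.ne', one_smul]
  have hxR : (R / ‖x‖) • x = R • θ := by
    rw [hnx, hx_def, smul_smul, div_mul_cancel₀ _ hr.ne']
  have hmem : (R / ‖x‖) • x ∈ V := by
    refine hsub ?_
    rw [hxR, mem_sphere_iff_norm, sub_zero, norm_smul, hθ, Real.norm_eq_abs,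
      abs_of_pos hR, mul_one]
  have hgrad := (key_grad hα hR hV huV hx0 hmem).gradient
  rw [hgrad, hxinv, hxR, hnx]
  set du := gradient u (R • θ) with hdu
  set q : ℝ := ⟪du, θ⟫ with hq
  set c₁ : ℝ := α * r ^ (α - 1) / R ^ α * u (R • θ) with hc1
  set c₂ : ℝ := r ^ (α - 1) * R ^ (1 - α) with hc2
  have hθp : ⟪θ, du - q • θ⟫ = 0 := by
    rw [inner_sub_right, real_inner_smul_right, real_inner_self_eq_norm_sq, hθ,
      real_inner_comm]
    ring
  have hpsq : ‖du - q • θ‖ ^ 2 = ‖du‖ ^ 2 - q ^ 2 := by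
    rw [norm_sub_sq_real, real_inner_smul_right, norm_smul, mul_pow, Real.norm_eq_abs,
      sq_abs, hθ, ← hq]
    ring
  have hexp : ‖c₁ • θ + c₂ • (du - q • θ)‖ ^ 2
      = c₁ ^ 2 + c₂ ^ 2 * (‖du‖ ^ 2 - q ^ 2) := by
    rw [norm_add_sq_real, real_inner_smul_left, real_inner_smul_right, hθp,
      norm_smul, norm_smul, mul_pow, mul_pow, Real.norm_eq_abs, Real.norm_eq_abs,
      sq_abs, sq_abs, hpsq, hθ]
    ring
  rw [hexp]
  -- rpow algebra
  have hra : (r ^ (α - 1)) ^ 2 = r ^ (2*α - 2) := by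
    rw [← Real.rpow_natCast (r ^ (α - 1)) 2, ← Real.rpow_mul hr.le]
    norm_num; ring_nf
  have hRa : (R ^ (1 - α)) ^ 2 = R ^ (2 - 2*α) := by
    rw [← Real.rpow_natCast (R ^ (1 - α)) 2, ← Real.rpow_mul hR.le]
    norm_num; ring_nf
  have hR2' : (R ^ α) ^ 2 * R ^ (2 - 2*α) = R ^ 2 := by
    rw [← Real.rpow_natCast (R ^ α) 2, ← Real.rpow_mul hR.le, ← Real.rpow_add hR,
      ← Real.rpow_natCast R 2]
    congr 1
    push_cast
    ring
  have hc2sq : c₂ ^ 2 = r ^ (2*α - 2) * R ^ (2 - 2*α) := by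
    rw [hc2, mul_pow, hra, hRa]
  have hc1sq : c₁ ^ 2 = r ^ (2*α - 2) * R ^ (2 - 2*α) * (α ^ 2 * u (R • θ) ^ 2 / R ^ 2) := by
    have hRα : (0:ℝ) < R ^ α := Real.rpow_pos_of_pos hR α
    rw [hc1, mul_pow, div_pow, mul_pow, hra]
    rw [div_mul_eq_mul_div, div_eq_iff (pow_ne_zero 2 hRα.ne'), mul_div_assoc]
    field_simp
    rw [show (2:ℝ) * (1 - α) = 2 - 2*α by ring]
    linear_combination (-(u (R • θ) ^ 2)) * hR2'
  rw [hc1sq, hc2sq]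
  ring


/-- Dirichlet energy of the α-homogeneous extension on `B_R`. -/
theorem energy_homExt {n : ℕ} (hn : 2 ≤ n) {α R : ℝ} (hα : 1 < α) (hR : 0 < R)
    (u : EuclideanSpace ℝ (Fin n) → ℝ)
    (hu : ∃ V : Set (EuclideanSpace ℝ (Fin n)), IsOpen V ∧
      closedBall (0 : EuclideanSpace ℝ (Fin n)) R ⊆ V ∧ ContDiffOn ℝ 1 u V) :
    (∫ x in ball (0 : EuclideanSpace ℝ (Fin n)) R, ‖gradient (homExt n α R u) x‖ ^ 2) =
      R ^ (n : ℝ) / ((n : ℝ) + 2 * (α - 1)) *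
        sphInt n (fun θ =>
          α ^ 2 * u (R • θ) ^ 2 / R ^ 2 + ‖gradient u (R • θ)‖ ^ 2
            - ⟪gradient u (R • θ), θ⟫ ^ 2) := by
  classical
  obtain ⟨V, hV, hVsub, huV⟩ := hu
  set G : EuclideanSpace ℝ (Fin n) → ℝ := fun θ =>
    α ^ 2 * u (R • θ) ^ 2 / R ^ 2 + ‖gradient u (R • θ)‖ ^ 2
      - ⟪gradient u (R • θ), θ⟫ ^ 2 with hG
  set k : ℝ → ℝ := fun t => if t < R then t ^ (2*α - 2) * R ^ (2 - 2*α) else 0 with hk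
  set F : EuclideanSpace ℝ (Fin n) → ℝ :=
    (ball (0 : EuclideanSpace ℝ (Fin n)) R).indicator
      (fun z => ‖gradient (homExt n α R u) z‖ ^ 2) with hF
  have hsub : sphere (0 : EuclideanSpace ℝ (Fin n)) R ⊆ V := fun z hz =>
    hVsub (sphere_subset_closedBall hz)
  have hdim : Module.finrank ℝ (EuclideanSpace ℝ (Fin n)) = n := finrank_euclideanSpace_fin
  -- pointwise identity on the product space
  have hpt : ∀ (p : sphere (0 : EuclideanSpace ℝ (Fin n)) 1 × Ioi (0:ℝ)),
      F (p.2.1 • p.1.1) = G p.1.1 * k p.2.1 := by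
    rintro ⟨⟨θ, hθ⟩, ⟨r, hr⟩⟩
    rw [mem_sphere_zero_iff_norm] at hθ
    rw [mem_Ioi] at hr
    have hnorm : ‖r • θ‖ = r := by
      rw [norm_smul, hθ, Real.norm_eq_abs, abs_of_pos hr, mul_one]
    by_cases hrR : r < R
    · have hmem : r • θ ∈ ball (0 : EuclideanSpace ℝ (Fin n)) R := by
        rw [mem_ball_zero_iff, hnorm]; exact hrR
      rw [hF, indicator_of_mem hmem, hk, hG]
      simp only [if_pos hrR]
      rw [key_normsq hα hR hV huV hsub hθ hr]
      ring
    · have hmem : r • θ ∉ ball (0 : EuclideanSpace ℝ (Fin n)) R := by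
        rw [mem_ball_zero_iff, hnorm]; exact hrR
      rw [hF, indicator_of_notMem hmem, hk]
      simp only [if_neg hrR, mul_zero]
  haveI : Nontrivial (EuclideanSpace ℝ (Fin n)) :=
    Module.nontrivial_of_finrank_pos (R := ℝ) (by rw [hdim]; omega)
  -- polar coordinates
  have h1 : (∫ x in ball (0 : EuclideanSpace ℝ (Fin n)) R, ‖gradient (homExt n α R u) x‖ ^ 2) =
      ∫ x, F x ∂(volume : Measure (EuclideanSpace ℝ (Fin n))) := (integral_indicator measurableSet_ball).symm
  have h2 : (∫ x, F x ∂(volume : Measure (EuclideanSpace ℝ (Fin n)))) = ∫ x : ({(0:EuclideanSpace ℝ (Fin n))}ᶜ : Set _), F x.1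
      ∂((volume : Measure (EuclideanSpace ℝ (Fin n))).comap Subtype.val) := by
    rw [integral_subtype_comap (measurableSet_singleton _).compl fun x => F x,
      restrict_compl_singleton]
  have h3 : (∫ x : ({(0:EuclideanSpace ℝ (Fin n))}ᶜ : Set _), F x.1 ∂((volume : Measure (EuclideanSpace ℝ (Fin n))).comap Subtype.val)) =
      ∫ p : sphere (0 : EuclideanSpace ℝ (Fin n)) 1 × Ioi (0:ℝ),
        F (p.2.1 • p.1.1) ∂((volume : Measure (EuclideanSpace ℝ (Fin n))).toSphere.prod (.volumeIoiPow (n - 1))) := by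
    rw [show n - 1 = Module.finrank ℝ (EuclideanSpace ℝ (Fin n)) - 1 from by rw [hdim]]
    refine Eq.trans ?_ ((volume : Measure (EuclideanSpace ℝ (Fin n))).measurePreserving_homeomorphUnitSphereProd.integral_comp
      (Homeomorph.measurableEmbedding _) (fun p => F (p.2.1 • p.1.1)))
    refine integral_congr_ae (Eventually.of_forall fun x => ?_)
    simp only [homeomorphUnitSphereProd_apply_snd_coe, homeomorphUnitSphereProd_apply_fst_coe,
      smul_inv_smul₀ (norm_ne_zero_iff.2 x.2)]
  have h4 : (∫ p : sphere (0 : EuclideanSpace ℝ (Fin n)) 1 × Ioi (0:ℝ),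
        F (p.2.1 • p.1.1) ∂((volume : Measure (EuclideanSpace ℝ (Fin n))).toSphere.prod (.volumeIoiPow (n - 1)))) =
      (∫ θ : sphere (0 : EuclideanSpace ℝ (Fin n)) 1, G θ.1 ∂(volume : Measure (EuclideanSpace ℝ (Fin n))).toSphere) *
        ∫ t : Ioi (0:ℝ), k t.1 ∂(Measure.volumeIoiPow (n - 1)) := by
    rw [← integral_prod_mul (fun θ : sphere (0 : EuclideanSpace ℝ (Fin n)) 1 => G θ.1)
      (fun t : Ioi (0:ℝ) => k t.1)]
    exact integral_congr_ae (Eventually.of_forall fun p => hpt p)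
  -- radial integral
  have h5 : (∫ t : Ioi (0:ℝ), k t.1 ∂(Measure.volumeIoiPow (n - 1))) =
      R ^ ((n:ℝ)) / ((n:ℝ) + 2*α - 2) := by
    have hn1 : (1:ℕ) ≤ n := by omega
    have hm : ((n - 1 : ℕ) : ℝ) = (n : ℝ) - 1 := by
      push_cast [Nat.cast_sub hn1]; ring
    have hc : (0:ℝ) < (n:ℝ) + 2*α - 2 := by
      have : (2:ℝ) ≤ (n:ℝ) := by exact_mod_cast hn
      nlinarith
    rw [Measure.volumeIoiPow]
    simp only [ENNReal.ofReal]
    rw [integral_withDensity_eq_integral_smul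
      ((measurable_subtype_coe.pow_const _).real_toNNReal) (fun t : Ioi (0:ℝ) => k t.1)]
    rw [integral_subtype_comap measurableSet_Ioi
      (fun a : ℝ => (a ^ (n-1)).toNNReal • k a)]
    rw [setIntegral_congr_fun measurableSet_Ioi
      (g := fun a : ℝ => (Ioo (0:ℝ) R).indicator
        (fun t => t ^ ((n:ℝ) + 2*α - 3) * R ^ (2 - 2*α)) a) ?_]
    · rw [integral_indicator measurableSet_Ioo, Measure.restrict_restrict measurableSet_Ioo,
        inter_eq_left.2 Ioo_subset_Ioi_self, integral_mul_const,
        Measure.restrict_congr_set Ioo_ae_eq_Ioc, ← intervalIntegral.integral_of_le hR.le,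
        integral_rpow (Or.inl (by linarith)), Real.zero_rpow (by linarith)]
      rw [show (n:ℝ) + 2*α - 3 + 1 = (n:ℝ) + 2*α - 2 by ring]
      rw [div_mul_eq_mul_div, sub_zero, ← Real.rpow_add hR,
        show (n:ℝ) + 2*α - 2 + (2 - 2*α) = (n:ℝ) by ring]
    · intro a ha
      rw [mem_Ioi] at ha
      simp only [NNReal.smul_def, Real.coe_toNNReal _ (pow_nonneg ha.le _), hk, smul_eq_mul]
      by_cases haR : a < R
      · rw [if_pos haR, indicator_of_mem (show a ∈ Ioo (0:ℝ) R from ⟨ha, haR⟩), ← mul_assoc,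
          ← Real.rpow_natCast a (n-1), ← Real.rpow_add ha, hm,
          show (n:ℝ) - 1 + (2*α - 2) = (n:ℝ) + 2*α - 3 by ring]
      · rw [if_neg haR, indicator_of_notMem (fun hmem => haR hmem.2), mul_zero]
  rw [h1, h2, h3, h4, h5]
  have hGG : sphInt n (fun θ => α ^ 2 * u (R • θ) ^ 2 / R ^ 2 + ‖gradient u (R • θ)‖ ^ 2
      - ⟪gradient u (R • θ), θ⟫ ^ 2) = ∫ θ : sphere (0 : EuclideanSpace ℝ (Fin n)) 1,
        G θ.1 ∂(volume : Measure (EuclideanSpace ℝ (Fin n))).toSphere := rfl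
  rw [hGG, show (n:ℝ) + 2*(α-1) = (n:ℝ) + 2*α - 2 by ring]
  ring
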